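/- Let Y be a nonempty finite type, G_a, G_b : Y → ℝ, and M ≥ 0 with |G_b(y)| ≤ M for all y ∈ Y. Suppose there is ε > 0 such that for all y1, y2 ∈ Y, if G_a(y1) > G_a(y2) then G_a(y1) − G_a(y2) ≥ ε, and suppose λ > 0 satisfies λ·ε > 2M. Define u(y) = λ·G_a(y) + G_b(y), let τ > 0, let π_ref : Y → ℝ be constant and strictly positive, and define the Bradley–Terry policy π*(y) = π_ref(y)·exp(u(y)/τ) / Σ_{y' ∈ Y} π_ref(y')·exp(u(y')/τ). Then for all y1, y2 ∈ Y: π*(y1) > π*(y2) if and only if G_a(y1) > G_a(y2), or G_a(y1) = G_a(y2) and G_b(y1) > G_b(y2). That is, the Bradley–Terry policy ranks responses exactly according to the strict lexicographic order of their score pairs. -/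
import Mathlib


theorem stmt_10 {Y : Type*} [Fintype Y] [Nonempty Y]
    (Ga Gb : Y → ℝ) (M : ℝ) (hM : 0 ≤ M) (hGb : ∀ y, |Gb y| ≤ M)
    (ε : ℝ) (hε : 0 < ε)
    (hgap : ∀ y1 y2, Ga y1 > Ga y2 → Ga y1 - Ga y2 ≥ ε)
    (lam : ℝ) (hlam : 0 < lam) (hlamε : lam * ε > 2 * M)
    (u : Y → ℝ) (hu : ∀ y, u y = lam * Ga y + Gb y)
    (τ : ℝ) (hτ : 0 < τ)
    (πref : Y → ℝ) (hπref : ∀ y, 0 < πref y)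
    (hconst : ∀ y1 y2, πref y1 = πref y2)
    (πstar : Y → ℝ)
    (hπstar : ∀ y, πstar y =
      πref y * Real.exp (u y / τ) / ∑ y', πref y' * Real.exp (u y' / τ)) :
    ∀ y1 y2 : Y,
      πstar y1 > πstar y2 ↔
        (Ga y1 > Ga y2 ∨ (Ga y1 = Ga y2 ∧ Gb y1 > Gb y2)) := by
  have hSpos : 0 < ∑ y', πref y' * Real.exp (u y' / τ) := by
    apply Finset.sum_pos
    · intro i _
      exact mul_pos (hπref i) (Real.exp_pos _)
    · exact Finset.univ_nonempty
  have key : ∀ y1 y2 : Y, πstar y1 > πstar y2 ↔ u y1 > u y2 := by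
    intro y1 y2
    rw [hπstar y1, hπstar y2, hconst y2 y1,
      gt_iff_lt, div_lt_div_iff_of_pos_right hSpos, mul_lt_mul_iff_right₀ (hπref y1),
      Real.exp_lt_exp, div_lt_div_iff_of_pos_right hτ]
  -- u comparison ↔ lex order
  have ulex : ∀ y1 y2 : Y, u y1 > u y2 ↔
      (Ga y1 > Ga y2 ∨ (Ga y1 = Ga y2 ∧ Gb y1 > Gb y2)) := by
    intro y1 y2
    have hb1 := abs_le.mp (hGb y1)
    have hb2 := abs_le.mp (hGb y2)
    rw [hu y1, hu y2]
    constructor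
    · intro h
      rcases lt_trichotomy (Ga y1) (Ga y2) with hlt | heq | hgt
      · exfalso
        have := hgap y2 y1 hlt
        nlinarith
      · right
        constructor
        · exact heq
        · rw [heq] at h; linarith
      · exact Or.inl hgt
    · rintro (hgt | ⟨heq, hb⟩)
      · have := hgap y1 y2 hgt
        nlinarith
      · rw [heq]; linarith
  intro y1 y2
  rw [key, ulex]
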